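/- Let A be a unital C*-algebra and let J be a ℂ-linear subspace of A. The following are equivalent: (i) there exist a nonzero complex Hilbert space H and a unital completely positive linear map φ : A → B(H) whose kernel equals J; (ii) there exists a nonempty family of states of A such that the intersection of their kernels equals J. -/

import Mathlib

open scoped ComplexOrder

set_option maxHeartbeats 1000000

noncomputable section
namespace StmtAux

variable {ι : Type}

abbrev Hι (ι : Type) := lp (fun _ : ι => ℂ) 2

lemma two_toReal : (2 : ENNReal).toReal = 2 := by norm_num

lemma memℓp_diag {c : ι → ℂ} {C : ℝ} (hC0 : 0 ≤ C) (hC : ∀ i, ‖c i‖ ≤ C) (v : Hι ι) :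
    Memℓp (fun i => c i * v i) 2 := by
  apply memℓp_gen
  rw [two_toReal]
  have hsum : Summable fun i => C ^ (2:ℝ) * ‖(v : ∀ _ : ι, ℂ) i‖ ^ (2:ℝ) := by
    have := (lp.memℓp v).summable (p := 2) (by norm_num)
    rw [two_toReal] at this
    exact this.mul_left _
  refine Summable.of_nonneg_of_le (fun i => by positivity) (fun i => ?_) hsum
  rw [← Real.mul_rpow (by positivity) (by positivity)]
  apply Real.rpow_le_rpow (norm_nonneg _) _ (by norm_num)
  rw [norm_mul]
  exact mul_le_mul_of_nonneg_right (hC i) (norm_nonneg _)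

def Bdd (c : ι → ℂ) : Prop := ∃ C : ℝ, 0 ≤ C ∧ ∀ i, ‖c i‖ ≤ C

def diag (c : ι → ℂ) (hc : Bdd c) : Hι ι →L[ℂ] Hι ι :=
  LinearMap.mkContinuousOfExistsBound
    { toFun := fun v => ⟨fun i => c i * v i, memℓp_diag hc.choose_spec.1 hc.choose_spec.2 v⟩
      map_add' := by
        intro v w; apply lp.ext; funext i
        simp only [lp.coeFn_add, Pi.add_apply]
        exact mul_add _ _ _
      map_smul' := by
        intro z v; apply lp.ext; funext i
        simp only [lp.coeFn_smul, Pi.smul_apply, RingHom.id_apply, smul_eq_mul]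
        ring }
    (by
      obtain ⟨C, hC0, hC⟩ := hc
      refine ⟨C, fun v => ?_⟩
      apply lp.norm_le_of_forall_sum_le (p := 2) (by norm_num)
        (mul_nonneg hC0 (norm_nonneg _))
      intro s
      rw [two_toReal]
      have hv : ∀ s : Finset ι, ∑ i ∈ s, ‖(v : ∀ _ : ι, ℂ) i‖ ^ (2:ℝ) ≤ ‖v‖ ^ (2:ℝ) := by
        intro s
        have h := lp.hasSum_norm (p := 2) (by norm_num) v
        rw [two_toReal] at h
        exact sum_le_hasSum s (fun i _ => by positivity) h
      calc ∑ i ∈ s, ‖c i * (v : ∀ _ : ι, ℂ) i‖ ^ (2:ℝ)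
          ≤ ∑ i ∈ s, C ^ (2:ℝ) * ‖(v : ∀ _ : ι, ℂ) i‖ ^ (2:ℝ) := by
            refine Finset.sum_le_sum fun i _ => ?_
            rw [← Real.mul_rpow (by positivity) (by positivity)]
            apply Real.rpow_le_rpow (norm_nonneg _) _ (by norm_num)
            rw [norm_mul]
            exact mul_le_mul_of_nonneg_right (hC i) (norm_nonneg _)
        _ = C ^ (2:ℝ) * ∑ i ∈ s, ‖(v : ∀ _ : ι, ℂ) i‖ ^ (2:ℝ) := by
            rw [Finset.mul_sum]
        _ ≤ C ^ (2:ℝ) * ‖v‖ ^ (2:ℝ) := by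
            apply mul_le_mul_of_nonneg_left (hv s) (by positivity)
        _ = (C * ‖v‖) ^ (2:ℝ) := by
            rw [Real.mul_rpow hC0 (norm_nonneg _)])

@[simp] lemma diag_apply (c : ι → ℂ) (hc : Bdd c) (v : Hι ι) (i : ι) :
    (diag c hc v : ∀ _ : ι, ℂ) i = c i * v i := rfl


lemma Bdd.star {c : ι → ℂ} (hc : Bdd c) : Bdd (fun i => (starRingEnd ℂ) (c i)) := by
  obtain ⟨C, h0, h⟩ := hc
  exact ⟨C, h0, fun i => by simpa using h i⟩

lemma star_diag (c : ι → ℂ) (hc : Bdd c) :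
    star (diag c hc) = diag (fun i => (starRingEnd ℂ) (c i)) hc.star := by
  rw [ContinuousLinearMap.star_eq_adjoint]
  symm
  rw [ContinuousLinearMap.eq_adjoint_iff]
  intro x y
  rw [lp.inner_eq_tsum, lp.inner_eq_tsum]
  congr 1; funext i
  simp only [diag_apply, RCLike.inner_apply, map_mul, RingHomCompTriple.comp_apply,
    RingHom.id_apply, starRingEnd_self_apply]
  ring

section State

variable {A : Type*} [CStarAlgebra A] [PartialOrder A] [StarOrderedRing A]
variable {f : A →ₗ[ℂ] ℂ}

lemma state_algebraMap (hf1 : f 1 = 1) (r : ℝ) : f (algebraMap ℝ A r) = (r : ℂ) := by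
  rw [IsScalarTower.algebraMap_apply ℝ ℂ A, Algebra.algebraMap_eq_smul_one, map_smul, hf1,
    smul_eq_mul, mul_one]
  rfl

lemma state_real (hfpos : ∀ a : A, 0 ≤ a → 0 ≤ f a) (hf1 : f 1 = 1) {b : A}
    (hb : IsSelfAdjoint b) : (starRingEnd ℂ) (f b) = f b := by
  have h1 : (0 : A) ≤ algebraMap ℝ A ‖b‖ + b := by
    have h := sub_nonneg.mpr hb.neg_algebraMap_norm_le_self
    rwa [sub_neg_eq_add, add_comm] at h
  have h2 := hfpos _ h1
  rw [Complex.le_def] at h2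
  have him : (f (algebraMap ℝ A ‖b‖ + b)).im = 0 := h2.2.symm
  rw [map_add, state_algebraMap hf1] at him
  simp only [Complex.add_im, Complex.ofReal_im, zero_add] at him
  exact Complex.conj_eq_iff_im.mpr him

lemma state_star (hfpos : ∀ a : A, 0 ≤ a → 0 ≤ f a) (hf1 : f 1 = 1) (a : A) :
    f (star a) = (starRingEnd ℂ) (f a) := by
  have hsa1 : IsSelfAdjoint (a + star a) := by
    rw [IsSelfAdjoint, star_add, star_star, add_comm]
  have hsa2 : IsSelfAdjoint (Complex.I • (a - star a)) := by
    rw [IsSelfAdjoint, star_smul, star_sub, star_star]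
    simp only [Complex.star_def, Complex.conj_I]
    rw [neg_smul, ← smul_neg, neg_sub]
  have h1 := state_real hfpos hf1 hsa1
  have h2 := state_real hfpos hf1 hsa2
  rw [map_add] at h1
  rw [map_smul, map_sub] at h2
  simp only [map_add, map_sub, smul_eq_mul, map_mul, Complex.conj_I] at h1 h2
  linear_combination -(h1 + Complex.I * h2) / 2
    + (f (star a) - (starRingEnd ℂ) (f a) + (starRingEnd ℂ) (f (star a)) - f a) / 2 * Complex.I_sq

lemma state_mono (hfpos : ∀ a : A, 0 ≤ a → 0 ≤ f a) {a b : A} (hab : a ≤ b) :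
    f a ≤ f b := by
  have h := hfpos (b - a) (sub_nonneg.mpr hab)
  rw [map_sub] at h
  exact sub_nonneg.mp h

lemma state_norm_bound (hfpos : ∀ a : A, 0 ≤ a → 0 ≤ f a) (hf1 : f 1 = 1) (a : A) :
    ‖f a‖ ≤ ‖a‖ := by
  have hc2 : f a * (starRingEnd ℂ) (f a) = ((‖f a‖ ^ 2 : ℝ) : ℂ) := by
    rw [Complex.mul_conj]
    simp [Complex.normSq_eq_norm_sq]
  have hc1 : (starRingEnd ℂ) (f a) * f a = ((‖f a‖ ^ 2 : ℝ) : ℂ) := by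
    rw [mul_comm]; exact hc2
  have key : ((‖f a‖ ^ 2 : ℝ) : ℂ) ≤ f (star a * a) := by
    have h0 := hfpos _ (star_mul_self_nonneg (a - f a • 1))
    have hexp : star (a - f a • 1) * (a - f a • 1)
        = star a * a - f a • star a - (starRingEnd ℂ) (f a) • a
          + (f a * (starRingEnd ℂ) (f a)) • (1 : A) := by
      simp only [star_sub, star_smul, star_one, sub_mul, mul_sub, smul_mul_assoc,
        mul_smul_comm, mul_one, one_mul, smul_smul, smul_sub, smul_add, smul_neg,
        Complex.star_def]
      abel
    rw [hexp, map_add, map_sub, map_sub, map_smul, map_smul, map_smul, hf1,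
      state_star hfpos hf1] at h0
    have he : f (star a * a) - f a • (starRingEnd ℂ) (f a) - (starRingEnd ℂ) (f a) • f a
        + (f a * (starRingEnd ℂ) (f a)) • (1 : ℂ)
        = f (star a * a) - ((‖f a‖ ^ 2 : ℝ) : ℂ) := by
      simp only [smul_eq_mul, mul_one]
      rw [hc1, hc2]
      ring
    rw [he] at h0
    exact sub_nonneg.mp h0
  have key3 : f (star a * a) ≤ ((‖a‖ ^ 2 : ℝ) : ℂ) := by
    have h := state_mono hfpos (CStarAlgebra.star_mul_le_algebraMap_norm_sq (a := a))
    rwa [state_algebraMap hf1] at h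
  have hr : (‖f a‖ ^ 2 : ℝ) ≤ (‖a‖ ^ 2 : ℝ) := by
    exact_mod_cast key.trans key3
  nlinarith [norm_nonneg (f a), norm_nonneg a]

end State

open scoped MatrixOrder in
theorem posSemidef_eq_conjTranspose_mul_self_aux {n : ℕ} {A : Matrix (Fin n) (Fin n) ℂ}
    (h : A.PosSemidef) : ∃ B : Matrix (Fin n) (Fin n) ℂ, A = B.conjTranspose * B := by
  obtain ⟨B, rfl⟩ := CStarAlgebra.nonneg_iff_eq_star_mul_self.mp h.nonneg
  exact ⟨B, rfl⟩

end StmtAux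
end

open StmtAux

/-- An element `M` of `Mₙ(A)` (for `A` a C*-algebra) is positive iff it factors as
`M = Nᴴ * N` for some `N ∈ Mₙ(A)`. -/
def IsPosMat {A : Type*} [Ring A] [StarRing A] {n : ℕ}
    (M : Matrix (Fin n) (Fin n) A) : Prop :=
  ∃ N : Matrix (Fin n) (Fin n) A, M = N.conjTranspose * N

/-- A linear map between C*-algebras is completely positive if all entrywise induced
maps on matrix algebras preserve positivity. -/
def CompletelyPositive {A B : Type*} [Ring A] [StarRing A] [Module ℂ A]
    [Ring B] [StarRing B] [Module ℂ B] (φ : A →ₗ[ℂ] B) : Prop :=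
  ∀ (n : ℕ) (M : Matrix (Fin n) (Fin n) A), IsPosMat M → IsPosMat (M.map φ)

/-- A subspace `J` of a unital C*-algebra `A` is the kernel of a unital completely
positive map into some `B(H)` (`H ≠ 0`) iff it is the intersection of the kernels of a
nonempty family of states of `A`. -/
theorem stmt1 {A : Type*} [CStarAlgebra A] [PartialOrder A] [StarOrderedRing A]
    (J : Submodule ℂ A) :
    (∃ (H : Type) (_ : NormedAddCommGroup H) (_ : InnerProductSpace ℂ H)
        (_ : CompleteSpace H) (_ : Nontrivial H) (φ : A →ₗ[ℂ] (H →L[ℂ] H)),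
        φ 1 = 1 ∧ CompletelyPositive φ ∧ LinearMap.ker φ = J) ↔
    (∃ (ι : Type) (_ : Nonempty ι) (f : ι → (A →ₗ[ℂ] ℂ)),
        (∀ i, f i 1 = 1 ∧ ∀ a : A, 0 ≤ a → 0 ≤ f i a) ∧
        (⨅ i, LinearMap.ker (f i)) = J) := by
  constructor
  · rintro ⟨H, _, _, _, _, φ, hφ1, hφCP, hker⟩
    obtain ⟨x, hx⟩ := exists_ne (0 : H)
    have hx' : ‖x‖ ≠ 0 := norm_ne_zero_iff.mpr hx
    have hne : Nonempty {v : H // ‖v‖ = 1} := by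
      refine ⟨⟨((‖x‖⁻¹ : ℝ) : ℂ) • x, ?_⟩⟩
      rw [norm_smul]
      simp only [Complex.norm_real, norm_inv, norm_norm]
      field_simp
    set F : {v : H // ‖v‖ = 1} → (A →ₗ[ℂ] ℂ) := fun v =>
      { toFun := fun a => @inner ℂ _ _ (v : H) (φ a (v : H))
        map_add' := fun a b => by
          rw [map_add, ContinuousLinearMap.add_apply, inner_add_right]
        map_smul' := fun z a => by
          rw [map_smul, ContinuousLinearMap.smul_apply, inner_smul_right]
          rfl } with hF
    have hFapp : ∀ (v : {v : H // ‖v‖ = 1}) (a : A),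
        F v a = @inner ℂ _ _ (v : H) (φ a (v : H)) := fun v a => rfl
    refine ⟨{v : H // ‖v‖ = 1}, hne, F, fun v => ⟨?_, ?_⟩, ?_⟩
    · rw [hFapp, hφ1, ContinuousLinearMap.one_apply, inner_self_eq_norm_sq_to_K, v.2]
      norm_num
    · intro a ha
      have hfac : IsPosMat (fun _ _ : Fin 1 => a : Matrix (Fin 1) (Fin 1) A) := by
        refine ⟨Matrix.of (fun _ _ => CFC.sqrt a), ?_⟩
        funext j k
        rw [Matrix.mul_apply]
        rw [Fin.sum_univ_one, Matrix.conjTranspose_apply, Matrix.of_apply, Matrix.of_apply]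
        rw [(IsSelfAdjoint.of_nonneg (CFC.sqrt_nonneg a)).star_eq, CFC.sqrt_mul_sqrt_self a ha]
      obtain ⟨Nop, hNop⟩ := hφCP 1 _ hfac
      have hentry := congrFun (congrFun hNop 0) 0
      erw [Matrix.map_apply] at hentry; rw [Matrix.mul_apply, Fin.sum_univ_one,
        Matrix.conjTranspose_apply] at hentry
      rw [hFapp, hentry, ContinuousLinearMap.mul_apply,
        ContinuousLinearMap.star_eq_adjoint, ContinuousLinearMap.adjoint_inner_right,
        inner_self_eq_norm_sq_to_K]
      calc (0 : ℂ) ≤ (((‖Nop 0 0 (v : H)‖ ^ 2 : ℝ)) : ℂ) := by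
            rw [Complex.zero_le_real]; positivity
        _ = (‖Nop 0 0 (v : H)‖ : ℂ) ^ 2 := by push_cast; ring
    · rw [← hker]
      ext a
      simp only [Submodule.mem_iInf, LinearMap.mem_ker]
      constructor
      · intro h
        have hzero : ∀ y : H, @inner ℂ _ _ ((φ a) y) y = 0 := by
          intro y
          rcases eq_or_ne y 0 with rfl | hy0
          · simp
          · have hy' : ‖y‖ ≠ 0 := norm_ne_zero_iff.mpr hy0
            have hu : ‖((‖y‖⁻¹ : ℝ) : ℂ) • y‖ = 1 := by
              rw [norm_smul]; simp only [Complex.norm_real, norm_inv, norm_norm]; field_simp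
            have h0 := h ⟨((‖y‖⁻¹ : ℝ) : ℂ) • y, hu⟩
            rw [hFapp] at h0
            simp only [map_smul, ContinuousLinearMap.smul_apply, inner_smul_right,
              inner_smul_left] at h0
            have hne0 : ((‖y‖⁻¹ : ℝ) : ℂ) ≠ 0 := by
              simp [Complex.ofReal_ne_zero, hy']
            have hinner : @inner ℂ _ _ y ((φ a) y) = 0 := by
              rcases mul_eq_zero.mp h0 with hc | hc
              · exact absurd hc hne0
              · rcases mul_eq_zero.mp hc with hc2 | hc2
                · exact absurd hc2 (by simpa using hne0)
                · exact hc2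
            rw [← inner_conj_symm, hinner, map_zero]
        have hT := (inner_map_self_eq_zero ((φ a) : H →ₗ[ℂ] H)).mp hzero
        ext y
        exact congrFun (congrArg (fun g : H →ₗ[ℂ] H => ⇑g) hT) y
      · intro h v
        rw [hFapp, h]
        simp
  · rintro ⟨ι, hι, f, hf, hker⟩
    classical
    have hnt : Nontrivial (Hι ι) := by
      obtain ⟨i0⟩ := hι
      refine ⟨⟨lp.single 2 i0 (1 : ℂ), 0, fun h => ?_⟩⟩
      have h1 := lp.single_apply_self (E := fun _ : ι => ℂ) 2 i0 (1 : ℂ)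
      rw [h] at h1
      simpa using h1
    have bdd : ∀ a : A, Bdd (fun i => f i a) := fun a =>
      ⟨‖a‖, norm_nonneg a, fun i => state_norm_bound (hf i).2 (hf i).1 a⟩
    set Φ : A →ₗ[ℂ] (Hι ι →L[ℂ] Hι ι) :=
      { toFun := fun a => diag (fun i => f i a) (bdd a)
        map_add' := fun a b => by
          refine ContinuousLinearMap.ext fun v => lp.ext (funext fun i => ?_)
          simp only [diag_apply, map_add, ContinuousLinearMap.add_apply, lp.coeFn_add,
            Pi.add_apply, diag_apply]
          ring
        map_smul' := fun z a => by
          refine ContinuousLinearMap.ext fun v => lp.ext (funext fun i => ?_)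
          simp only [diag_apply, map_smul, RingHom.id_apply,
            ContinuousLinearMap.smul_apply, lp.coeFn_smul, Pi.smul_apply, smul_eq_mul]
          ring } with hΦ
    have hΦapp : ∀ (a : A) (v : Hι ι) (i : ι), ((Φ a) v : ∀ _ : ι, ℂ) i = f i a * v i :=
      fun a v i => rfl
    refine ⟨Hι ι, inferInstance, inferInstance, inferInstance, hnt, Φ, ?_, ?_, ?_⟩
    · refine ContinuousLinearMap.ext fun v => lp.ext (funext fun i => ?_)
      rw [hΦapp, (hf i).1, one_mul, ContinuousLinearMap.one_apply]
    · intro n M hM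
      obtain ⟨N, rfl⟩ := hM
      -- each scalar matrix is positive semidefinite
      have hSpos : ∀ i : ι, ((N.conjTranspose * N).map (f i)).PosSemidef := by
        intro i
        refine Matrix.PosSemidef.of_dotProduct_mulVec_nonneg ?_ ?_
        · have hMh : (N.conjTranspose * N).conjTranspose = N.conjTranspose * N := by
            rw [Matrix.conjTranspose_mul, Matrix.conjTranspose_conjTranspose]
          ext j k
          rw [Matrix.conjTranspose_apply, Matrix.map_apply, Matrix.map_apply,
            Complex.star_def, ← state_star (hf i).2 (hf i).1]
          congr 1
          rw [← Matrix.conjTranspose_apply, hMh]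
        · intro x
          have hA : (∑ j, ∑ k, ((starRingEnd ℂ) (x j) * x k) • ((N.conjTranspose * N) j k))
              = ∑ l, star (∑ k, x k • N l k) * (∑ k, x k • N l k) := by
            have hterm : ∀ l, star (∑ k, x k • N l k) * (∑ k, x k • N l k)
                = ∑ j, ∑ k, ((starRingEnd ℂ) (x j) * x k) • (star (N l j) * N l k) := by
              intro l
              rw [star_sum, Finset.sum_mul_sum]
              refine Finset.sum_congr rfl fun j _ => Finset.sum_congr rfl fun k _ => ?_
              rw [star_smul, smul_mul_assoc, mul_smul_comm, smul_smul]
              rfl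
            have e1 : (∑ j, ∑ k, ((starRingEnd ℂ) (x j) * x k) • ((N.conjTranspose * N) j k))
                = ∑ j, ∑ k, ∑ l, ((starRingEnd ℂ) (x j) * x k) • (star (N l j) * N l k) := by
              simp only [Matrix.mul_apply, Matrix.conjTranspose_apply, Finset.smul_sum]
            rw [e1]
            have e3 : ∀ j : Fin n, (∑ k, ∑ l, ((starRingEnd ℂ) (x j) * x k)
                  • (star (N l j) * N l k))
                = ∑ l, ∑ k, ((starRingEnd ℂ) (x j) * x k) • (star (N l j) * N l k) :=
              fun j => Finset.sum_comm
            simp only [e3]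
            rw [Finset.sum_comm]
            exact Finset.sum_congr rfl fun l _ => (hterm l).symm
          have hposA : (0 : A) ≤ ∑ l, star (∑ k, x k • N l k) * (∑ k, x k • N l k) :=
            Finset.sum_nonneg fun l _ => star_mul_self_nonneg _
          have hq : dotProduct (star x) (((N.conjTranspose * N).map (f i)).mulVec x)
              = f i (∑ j, ∑ k, ((starRingEnd ℂ) (x j) * x k) • ((N.conjTranspose * N) j k)) := by
            simp only [map_sum, map_smul, dotProduct, Matrix.mulVec, Matrix.map_apply,
              Pi.star_apply, smul_eq_mul, Finset.mul_sum]
            refine Finset.sum_congr rfl fun j _ => Finset.sum_congr rfl fun k _ => ?_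
            simp only [Complex.star_def]
            ring
          rw [hq, hA]
          exact (hf i).2 _ hposA
      -- choose square roots
      set R : ι → Matrix (Fin n) (Fin n) ℂ := fun i =>
        (posSemidef_eq_conjTranspose_mul_self_aux (hSpos i)).choose with hRdef
      have hR : ∀ i, (N.conjTranspose * N).map (f i) = (R i).conjTranspose * (R i) :=
        fun i => (posSemidef_eq_conjTranspose_mul_self_aux (hSpos i)).choose_spec
      -- uniform entry bound
      have hRbd : ∀ (j k : Fin n) (i : ι),
          ‖R i j k‖ ≤ Real.sqrt ‖(N.conjTranspose * N) k k‖ := by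
        intro j k i
        have h1 : f i ((N.conjTranspose * N) k k) = ((∑ l, ‖R i l k‖ ^ 2 : ℝ) : ℂ) := by
          have := congrFun (congrFun (hR i) k) k
          rw [Matrix.map_apply] at this
          rw [this, Matrix.mul_apply]
          push_cast
          refine Finset.sum_congr rfl fun l _ => ?_
          rw [Matrix.conjTranspose_apply, Complex.star_def, mul_comm, Complex.mul_conj]
          simp [Complex.normSq_eq_norm_sq]
        have h2 : (∑ l, ‖R i l k‖ ^ 2 : ℝ) ≤ ‖(N.conjTranspose * N) k k‖ := by
          have hb := state_norm_bound (hf i).2 (hf i).1 ((N.conjTranspose * N) k k)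
          rw [h1] at hb
          rw [Complex.norm_real] at hb
          calc (∑ l, ‖R i l k‖ ^ 2 : ℝ) ≤ |(∑ l, ‖R i l k‖ ^ 2 : ℝ)| := le_abs_self _
            _ ≤ ‖(N.conjTranspose * N) k k‖ := hb
        have h3 : ‖R i j k‖ ^ 2 ≤ ∑ l, ‖R i l k‖ ^ 2 :=
          Finset.single_le_sum (f := fun l => ‖R i l k‖ ^ 2)
            (fun l _ => sq_nonneg _) (Finset.mem_univ j)
        have h4 := Real.sqrt_le_sqrt (h3.trans h2)
        rwa [Real.sqrt_sq (norm_nonneg _)] at h4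
      set Q : Matrix (Fin n) (Fin n) (Hι ι →L[ℂ] Hι ι) := Matrix.of fun j k =>
        diag (fun i => R i j k)
          ⟨Real.sqrt ‖(N.conjTranspose * N) k k‖, Real.sqrt_nonneg _, hRbd j k⟩ with hQdef
      refine ⟨Q, ?_⟩
      refine Matrix.ext fun j k => ?_
      refine ContinuousLinearMap.ext fun v => lp.ext (funext fun i => ?_)
      have hLHS : ((((N.conjTranspose * N).map Φ) j k) v : ∀ _ : ι, ℂ) i
          = f i ((N.conjTranspose * N) j k) * v i := rfl
      have hRHS : (((Q.conjTranspose * Q) j k) v : ∀ _ : ι, ℂ) i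
          = ∑ l, (starRingEnd ℂ) (R i l j) * (R i l k * v i) := by
        rw [Matrix.mul_apply, ContinuousLinearMap.sum_apply, lp.coeFn_sum, Finset.sum_apply]
        refine Finset.sum_congr rfl fun l _ => ?_
        rw [Matrix.conjTranspose_apply, ContinuousLinearMap.mul_apply, hQdef]
        simp only [Matrix.of_apply]
        erw [star_diag]
        rfl
      rw [hLHS, hRHS]
      have := congrFun (congrFun (hR i) j) k
      rw [Matrix.map_apply] at this
      rw [this, Matrix.mul_apply, Finset.sum_mul]
      refine Finset.sum_congr rfl fun l _ => ?_
      rw [Matrix.conjTranspose_apply, Complex.star_def]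
      ring
    · rw [← hker]
      ext a
      simp only [LinearMap.mem_ker, Submodule.mem_iInf]
      constructor
      · intro h i
        have h1 : ((Φ a) (lp.single 2 i (1 : ℂ)) : ∀ _ : ι, ℂ) i = 0 := by
          rw [h]; simp
        rw [hΦapp, lp.single_apply_self] at h1
        simpa using h1
      · intro h
        refine ContinuousLinearMap.ext fun v => lp.ext (funext fun i => ?_)
        rw [hΦapp, h i]
        simp
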